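/- Let k ≥ 0 and let C be a fixed partition. The map w ↦ v(w), where v(w) is obtained by sorting the entries w_{k+1},…,w_n into increasing order, is a bijection from the set of signed permutations w ∈ W_n that are increasing up to k (0 < w_1 < ⋯ < w_k) and have k-truncated A-code equal to C, onto the set of k-Grassmannian elements of W_n; moreover ℓ(v(w)) = ℓ(w) − Σ_{i=k+1}^n C_i. -/

import Mathlib

/-- `w : Fin n → ℤ` is a signed permutation. -/
def IsSignedPerm {n : ℕ} (w : Fin n → ℤ) : Prop :=
  (∀ i, 1 ≤ |w i| ∧ |w i| ≤ n) ∧ Function.Injective fun i => |w i|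

/-- The A-code of a signed permutation: γ_i = #{j > i : w j < w i}. -/
def codeS {n : ℕ} (w : Fin n → ℤ) (i : Fin n) : ℕ :=
  (Finset.univ.filter fun j : Fin n => i < j ∧ w j < w i).card

/-- Length of a signed permutation (type B/C). -/
def lenS {n : ℕ} (w : Fin n → ℤ) : ℕ :=
  ((Finset.univ ×ˢ Finset.univ).filter
    fun p : Fin n × Fin n => p.1 < p.2 ∧ w p.2 < w p.1).card +
  ∑ i ∈ Finset.univ.filter (fun i : Fin n => w i < 0), (-(w i)).toNat

/-- w is increasing up to k: 0 < w_1 < ⋯ < w_k. -/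
def IncUpTo {n : ℕ} (k : ℕ) (w : Fin n → ℤ) : Prop :=
  (∀ i : Fin n, (i : ℕ) < k → 0 < w i) ∧
  (∀ i j : Fin n, i < j → (j : ℕ) < k → w i < w j)

/-- The k-truncated A-code of w equals C (0-indexed: γ_{k+1+i} = C i). -/
def TruncCodeEq {n : ℕ} (k : ℕ) (w : Fin n → ℤ) (C : ℕ → ℕ) : Prop :=
  ∀ i : Fin n, k ≤ (i : ℕ) → codeS w i = C ((i : ℕ) - k)

/-- v is k-Grassmannian: 0 < v_1 < ⋯ < v_k and v_{k+1} < ⋯ < v_n. -/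
def IsGrass {n : ℕ} (k : ℕ) (v : Fin n → ℤ) : Prop :=
  IsSignedPerm v ∧ IncUpTo k v ∧
  (∀ i j : Fin n, i < j → k ≤ (i : ℕ) → v i < v j)

/-- v is obtained from w by sorting the entries w_{k+1}, …, w_n increasingly. -/
def SortsTail {n : ℕ} (k : ℕ) (w v : Fin n → ℤ) : Prop :=
  (∀ i : Fin n, (i : ℕ) < k → v i = w i) ∧
  (∀ i j : Fin n, i < j → k ≤ (i : ℕ) → v i < v j) ∧
  ((Finset.univ.filter fun i : Fin n => k ≤ (i : ℕ)).val.map v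
    = (Finset.univ.filter fun i : Fin n => k ≤ (i : ℕ)).val.map w)


namespace S13

def tailSet (n k : ℕ) : Finset (Fin n) := Finset.univ.filter fun i : Fin n => k ≤ (i : ℕ)

lemma card_filter_lt (m c : ℕ) (hc : c ≤ m) :
    ((Finset.univ : Finset (Fin m)).filter fun j : Fin m => (j : ℕ) < c).card = c := by
  have h : ((Finset.univ : Finset (Fin m)).filter fun j : Fin m => (j : ℕ) < c).image Fin.val
      = Finset.range c := by
    ext a
    simp only [Finset.mem_image, Finset.mem_filter, Finset.mem_univ, true_and, Finset.mem_range]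
    constructor
    · rintro ⟨j, hj, rfl⟩; exact hj
    · intro ha; exact ⟨⟨a, lt_of_lt_of_le ha hc⟩, ha, rfl⟩
  calc ((Finset.univ : Finset (Fin m)).filter fun j : Fin m => (j : ℕ) < c).card
      = (((Finset.univ : Finset (Fin m)).filter fun j : Fin m => (j : ℕ) < c).image Fin.val).card :=
        (Finset.card_image_of_injective _ Fin.val_injective).symm
    _ = c := by rw [h, Finset.card_range]

lemma card_tailSet (n k : ℕ) : (tailSet n k).card = n - k := by
  have h : (tailSet n k).image Fin.val = Finset.Ico k n := by
    ext a
    simp only [tailSet, Finset.mem_image, Finset.mem_filter, Finset.mem_univ, true_and,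
      Finset.mem_Ico]
    constructor
    · rintro ⟨j, hj, rfl⟩; exact ⟨hj, j.isLt⟩
    · rintro ⟨h1, h2⟩; exact ⟨⟨a, h2⟩, h1, rfl⟩
  rw [← Nat.card_Ico k n, ← h, Finset.card_image_of_injective _ Fin.val_injective]

lemma pick_mem (S : Finset ℤ) {c : ℕ} (hc : c < S.card) : (S.sort (· ≤ ·)).getD c 0 ∈ S := by
  have hcl : c < (S.sort (· ≤ ·)).length := by rw [Finset.length_sort]; exact hc
  rw [List.getD_eq_get _ 0 ⟨c, hcl⟩]
  exact (Finset.mem_sort _).1 (List.get_mem _ _)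

lemma rank_get (S : Finset ℤ) {c : ℕ} (hc : c < S.card) :
    (S.filter fun y => y < (S.sort (· ≤ ·)).getD c 0).card = c := by
  have hlen : (S.sort (· ≤ ·)).length = S.card := Finset.length_sort _
  have hcl : c < (S.sort (· ≤ ·)).length := by omega
  have hsorted : (S.sort (· ≤ ·)).SortedLT := Finset.sortedLT_sort S
  have hmono := hsorted.strictMono_get
  rw [List.getD_eq_get _ 0 ⟨c, hcl⟩]
  have himg : (S.filter fun y => y < (S.sort (· ≤ ·)).get ⟨c, hcl⟩)
      = (Finset.univ.filter fun j : Fin (S.sort (· ≤ ·)).length => (j : ℕ) < c).image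
          (S.sort (· ≤ ·)).get := by
    ext y
    simp only [Finset.mem_filter, Finset.mem_image, Finset.mem_univ, true_and]
    constructor
    · rintro ⟨hyS, hy⟩
      have hyl : y ∈ S.sort (· ≤ ·) := (Finset.mem_sort _).2 hyS
      obtain ⟨j, rfl⟩ := List.mem_iff_get.1 hyl
      exact ⟨j, hmono.lt_iff_lt.1 hy, rfl⟩
    · rintro ⟨j, hj, rfl⟩
      refine ⟨(Finset.mem_sort _).1 (List.get_mem _ _), ?_⟩
      exact hmono (show j < ⟨c, hcl⟩ from hj)
  rw [himg, Finset.card_image_of_injective _ hmono.injective, card_filter_lt]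
  omega


lemma rank_lt {S : Finset ℤ} {x y : ℤ} (hx : x ∈ S) (hlt : x < y) :
    (S.filter fun z => z < x).card < (S.filter fun z => z < y).card := by
  apply Finset.card_lt_card
  constructor
  · intro z hz; simp only [Finset.mem_filter] at hz ⊢; exact ⟨hz.1, hz.2.trans hlt⟩
  · intro hsub
    have hmem : x ∈ S.filter fun z => z < x := hsub (by simp [hx, hlt])
    simp at hmem

lemma rank_inj {S : Finset ℤ} {x y : ℤ} (hx : x ∈ S) (hy : y ∈ S)
    (h : (S.filter fun z => z < x).card = (S.filter fun z => z < y).card) : x = y := by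
  rcases lt_trichotomy x y with hlt | he | hlt
  · exact absurd h (Nat.ne_of_lt (rank_lt hx hlt))
  · exact he
  · exact absurd h.symm (Nat.ne_of_lt (rank_lt hy hlt))

lemma card_range_filter_getD (p : ℤ → Prop) [DecidablePred p] :
    ∀ l : List ℤ, ((Finset.range l.length).filter fun s => p (l.getD s 0)).card
      = Multiset.card (Multiset.filter p (↑l : Multiset ℤ))
  | [] => by simp
  | a :: l => by
    rw [Finset.card_filter, List.length_cons, Finset.sum_range_succ']
    simp only [List.getD_cons_succ, List.getD_cons_zero]
    rw [← Finset.card_filter, card_range_filter_getD p l]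
    rw [show (↑(a :: l) : Multiset ℤ) = a ::ₘ ↑l from (Multiset.cons_coe a l).symm,
      Multiset.filter_cons, Multiset.card_add]
    by_cases hpa : p a <;> simp [hpa] <;> omega


def buildL (C : ℕ → ℕ) : ℕ → ℕ → Finset ℤ → List ℤ
  | 0, _, _ => []
  | m + 1, i, S =>
    (S.sort (· ≤ ·)).getD (C i) 0 ::
      buildL C m (i + 1) (S.erase ((S.sort (· ≤ ·)).getD (C i) 0))

lemma buildL_length (C : ℕ → ℕ) : ∀ m i S, (buildL C m i S).length = m
  | 0, _, _ => rfl
  | m + 1, i, S => by simp [buildL, buildL_length C m]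

lemma buildL_spec (C : ℕ → ℕ) : ∀ m : ℕ, ∀ i0 : ℕ, ∀ S : Finset ℤ, S.card = m →
    (∀ t, t < m → C (i0 + t) + t + 1 ≤ m) →
    ((↑(buildL C m i0 S) : Multiset ℤ) = S.val ∧
     ∀ t, t < m → ((Finset.range m).filter fun t' =>
        t < t' ∧ (buildL C m i0 S).getD t' 0 < (buildL C m i0 S).getD t 0).card
          = C (i0 + t)) := by
  intro m
  induction m with
  | zero =>
    intro i0 S hS _
    refine ⟨?_, fun t ht => absurd ht (by omega)⟩
    have : S = ∅ := Finset.card_eq_zero.1 hS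
    simp [buildL, this]
  | succ m IH =>
    intro i0 S hS hbd
    set x := (S.sort (· ≤ ·)).getD (C i0) 0 with hxdef
    have hC0 : C i0 < S.card := by have := hbd 0 (by omega); simp at this; omega
    have hxS : x ∈ S := pick_mem S hC0
    have hrank : (S.filter fun z => z < x).card = C i0 := rank_get S hC0
    have hcard' : (S.erase x).card = m := by rw [Finset.card_erase_of_mem hxS, hS]; omega
    have hbd' : ∀ t, t < m → C (i0 + 1 + t) + t + 1 ≤ m := by
      intro t ht
      have h2 : i0 + 1 + t = i0 + (t + 1) := by ring
      rw [h2]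
      have := hbd (t + 1) (by omega); omega
    obtain ⟨hmul, hcode⟩ := IH (i0 + 1) (S.erase x) hcard' hbd'
    set L' := buildL C m (i0 + 1) (S.erase x) with hL'
    have hlenL' : L'.length = m := buildL_length C m _ _
    have hbuild : buildL C (m + 1) i0 S = x :: L' := rfl
    have hxval : x ∈ S.val := hxS
    constructor
    · rw [hbuild, ← Multiset.cons_coe, hmul, Finset.erase_val, Multiset.cons_erase hxval]
    · intro t ht
      rw [hbuild]
      match t with
      | 0 =>
        rw [Finset.card_filter, Finset.sum_range_succ']
        simp only [List.getD_cons_succ, List.getD_cons_zero, Nat.lt_irrefl, false_and,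
          if_false, add_zero, Nat.zero_lt_succ, true_and, lt_self_iff_false]
        rw [← Finset.card_filter]
        have : ((Finset.range m).filter fun s => L'.getD s 0 < x).card
            = Multiset.card (Multiset.filter (fun z => z < x) (↑L' : Multiset ℤ)) := by
          rw [← hlenL']; exact card_range_filter_getD (fun z => z < x) L'
        rw [this, hmul, ← Finset.filter_val, Finset.filter_erase]
        have hnx : x ∉ S.filter fun z => z < x := by simp
        rw [Finset.erase_eq_of_notMem hnx]
        have : Multiset.card (S.filter fun z => z < x).val = (S.filter fun z => z < x).card := rfl
        rw [this, hrank]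
      | t + 1 =>
        rw [Finset.card_filter, Finset.sum_range_succ']
        simp only [List.getD_cons_succ, Nat.add_lt_add_iff_right, Nat.not_lt_zero, false_and,
          if_false, add_zero]
        rw [← Finset.card_filter]
        have h3 := hcode t (by omega)
        have h4 : i0 + 1 + t = i0 + (t + 1) := by ring
        rw [← h4, ← h3]

section Len
variable {n : ℕ} (k : ℕ)

def tval (w : Fin n → ℤ) : Multiset ℤ := (tailSet n k).val.map w

def hInv (w : Fin n → ℤ) : ℕ :=
  ((Finset.univ ×ˢ Finset.univ).filter
    fun p : Fin n × Fin n => (p.1 < p.2 ∧ w p.2 < w p.1) ∧ (p.2 : ℕ) < k).card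

def cInv (w : Fin n → ℤ) : ℕ :=
  ((Finset.univ ×ˢ Finset.univ).filter
    fun p : Fin n × Fin n => ((p.1 < p.2 ∧ w p.2 < w p.1) ∧ ¬ (p.2 : ℕ) < k) ∧ (p.1 : ℕ) < k).card

def tInv (w : Fin n → ℤ) : ℕ :=
  ((Finset.univ ×ˢ Finset.univ).filter
    fun p : Fin n × Fin n => ((p.1 < p.2 ∧ w p.2 < w p.1) ∧ ¬ (p.2 : ℕ) < k) ∧ ¬ (p.1 : ℕ) < k).card

def nSum {n : ℕ} (w : Fin n → ℤ) : ℕ := ∑ i : Fin n, if w i < 0 then (-(w i)).toNat else 0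

lemma lenS_eq (w : Fin n → ℤ) : lenS w = hInv k w + cInv k w + tInv k w + nSum w := by
  have hn : (∑ i ∈ Finset.univ.filter (fun i : Fin n => w i < 0), (-(w i)).toNat) = nSum w := by
    rw [nSum, Finset.sum_filter]
  have h1 := Finset.card_filter_add_card_filter_not (p := fun p : Fin n × Fin n => (p.2 : ℕ) < k)
    (s := (Finset.univ ×ˢ Finset.univ).filter fun p : Fin n × Fin n => p.1 < p.2 ∧ w p.2 < w p.1)
  have h2 := Finset.card_filter_add_card_filter_not (p := fun p : Fin n × Fin n => (p.1 : ℕ) < k)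
    (s := ((Finset.univ ×ˢ Finset.univ).filter fun p : Fin n × Fin n => p.1 < p.2 ∧ w p.2 < w p.1).filter
      fun p => ¬ (p.2 : ℕ) < k)
  rw [lenS, hn, hInv, cInv, tInv]
  simp only [Finset.filter_filter, and_assoc] at h1 h2 ⊢
  omega

lemma tInv_eq_sum (w : Fin n → ℤ) : tInv k w = ∑ i ∈ tailSet n k, codeS w i := by
  have hcong : ((Finset.univ ×ˢ Finset.univ).filter
      fun p : Fin n × Fin n => ((p.1 < p.2 ∧ w p.2 < w p.1) ∧ ¬ (p.2 : ℕ) < k) ∧ ¬ (p.1 : ℕ) < k)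
      = (Finset.univ ×ˢ Finset.univ).filter
        fun p : Fin n × Fin n => k ≤ (p.1 : ℕ) ∧ p.1 < p.2 ∧ w p.2 < w p.1 := by
    apply Finset.filter_congr
    intro p _
    simp only [Fin.lt_def]
    constructor
    · rintro ⟨⟨⟨a, b⟩, _⟩, d⟩; exact ⟨by omega, a, b⟩
    · rintro ⟨a, b, c⟩; exact ⟨⟨⟨b, c⟩, by omega⟩, by omega⟩
  rw [tInv, hcong, Finset.card_filter, Finset.univ_product_univ, Fintype.sum_prod_type]
  rw [tailSet, Finset.sum_filter]
  apply Finset.sum_congr rfl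
  intro i _
  by_cases hk : k ≤ (i : ℕ)
  · simp only [hk, true_and, if_true]
    rw [codeS, Finset.card_filter]
  · simp [hk]

lemma cInv_eq_sum (w : Fin n → ℤ) : cInv k w
    = ∑ i ∈ Finset.univ.filter (fun i : Fin n => (i : ℕ) < k),
        Multiset.countP (fun z => z < w i) (tval k w) := by
  have hcong : ((Finset.univ ×ˢ Finset.univ).filter
      fun p : Fin n × Fin n => ((p.1 < p.2 ∧ w p.2 < w p.1) ∧ ¬ (p.2 : ℕ) < k) ∧ (p.1 : ℕ) < k)
      = (Finset.univ ×ˢ Finset.univ).filter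
        fun p : Fin n × Fin n => (p.1 : ℕ) < k ∧ k ≤ (p.2 : ℕ) ∧ w p.2 < w p.1 := by
    apply Finset.filter_congr
    intro p _
    simp only [Fin.lt_def]
    constructor
    · rintro ⟨⟨⟨a, b⟩, c⟩, d⟩; exact ⟨d, by omega, b⟩
    · rintro ⟨a, b, c⟩; exact ⟨⟨⟨by omega, c⟩, by omega⟩, a⟩
  rw [cInv, hcong, Finset.card_filter, Finset.univ_product_univ, Fintype.sum_prod_type]
  rw [Finset.sum_filter]
  apply Finset.sum_congr rfl
  intro i _
  by_cases hk : (i : ℕ) < k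
  · simp only [hk, true_and, if_true]
    rw [← Finset.card_filter]
    have h1 : (Finset.univ.filter fun j : Fin n => k ≤ (j : ℕ) ∧ w j < w i)
        = (tailSet n k).filter fun j => w j < w i := by
      rw [tailSet, Finset.filter_filter]
    rw [h1]
    have h2 : ((tailSet n k).filter fun j => w j < w i).card
        = Multiset.card (Multiset.filter (fun j => w j < w i) (tailSet n k).val) := rfl
    rw [h2, Multiset.countP_eq_card_filter, tval]
    rw [Multiset.filter_map, Multiset.card_map]
    rfl
  · simp [hk]

lemma nSum_split (w : Fin n → ℤ) : nSum w
    = (∑ i ∈ Finset.univ.filter (fun i : Fin n => (i : ℕ) < k),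
        (if w i < 0 then (-(w i)).toNat else 0))
      + Multiset.sum (Multiset.map (fun z => if z < 0 then (-z).toNat else 0) (tval k w)) := by
  rw [nSum, ← Finset.sum_filter_add_sum_filter_not Finset.univ (fun i : Fin n => (i : ℕ) < k)]
  congr 1
  have h1 : (Finset.univ.filter fun i : Fin n => ¬ (i : ℕ) < k) = tailSet n k := by
    rw [tailSet]; apply Finset.filter_congr; intro i _; omega
  rw [h1, tval, Multiset.map_map, Finset.sum]
  rfl

end Len
lemma len_rel {n k : ℕ} {w v : Fin n → ℤ}
    (hhead : ∀ i : Fin n, (i : ℕ) < k → v i = w i)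
    (htail : tval k v = tval k w) :
    lenS w + tInv k v = lenS v + tInv k w := by
  have hh : hInv k v = hInv k w := by
    rw [hInv, hInv]
    congr 1
    apply Finset.filter_congr
    intro p _
    constructor
    · rintro ⟨⟨h1, h2⟩, h3⟩
      have hp1 : (p.1 : ℕ) < k := by have := Fin.lt_def.1 h1; omega
      rw [hhead p.1 hp1, hhead p.2 h3] at h2
      exact ⟨⟨h1, h2⟩, h3⟩
    · rintro ⟨⟨h1, h2⟩, h3⟩
      have hp1 : (p.1 : ℕ) < k := by have := Fin.lt_def.1 h1; omega
      rw [← hhead p.1 hp1, ← hhead p.2 h3] at h2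
      exact ⟨⟨h1, h2⟩, h3⟩
  have hc : cInv k v = cInv k w := by
    rw [cInv_eq_sum, cInv_eq_sum]
    apply Finset.sum_congr rfl
    intro i hi
    simp only [Finset.mem_filter] at hi
    rw [hhead i hi.2, htail]
  have hns : nSum v = nSum w := by
    rw [nSum_split k, nSum_split k, htail]
    congr 1
    apply Finset.sum_congr rfl
    intro i hi
    simp only [Finset.mem_filter] at hi
    rw [hhead i hi.2]
  rw [lenS_eq k w, lenS_eq k v, hh, hc, hns]
  omega

lemma sum_tail_C {n k : ℕ} (C : ℕ → ℕ) :
    ∑ i ∈ tailSet n k, C ((i : ℕ) - k) = ∑ j ∈ Finset.range (n - k), C j := by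
  refine Finset.sum_bij' (i := fun (i : Fin n) (_ : i ∈ tailSet n k) => (i : ℕ) - k)
    (j := fun (j : ℕ) (hj : j ∈ Finset.range (n - k)) =>
      (⟨k + j, by simp only [Finset.mem_range] at hj; omega⟩ : Fin n)) ?_ ?_ ?_ ?_ ?_
  · intro a ha
    simp only [tailSet, Finset.mem_filter] at ha
    simp only [Finset.mem_range]
    have := a.isLt; omega
  · intro a ha
    simp only [tailSet, Finset.mem_filter, Finset.mem_univ, true_and]
    omega
  · intro a ha
    simp only [tailSet, Finset.mem_filter] at ha
    apply Fin.ext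
    simp only
    omega
  · intro a ha
    simp only
    simp only [Finset.mem_range] at ha
    omega
  · intro a ha
    rfl

section Glue
variable {n : ℕ} (k : ℕ) (u : Fin n → ℤ) (L : List ℤ)

def glue (i : Fin n) : ℤ := if (i : ℕ) < k then u i else L.getD ((i : ℕ) - k) 0

variable {k u L}
variable (hu : Function.Injective u)
    (hL : (↑L : Multiset ℤ) = ((tailSet n k).image u).val)

include hu hL

lemma glue_len : L.length = n - k := by
  have h := congrArg Multiset.card hL
  rw [Multiset.coe_card] at h
  have h2 : Multiset.card ((tailSet n k).image u).val = ((tailSet n k).image u).card := rfl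
  rw [h, h2, Finset.card_image_of_injective _ hu, card_tailSet]

lemma mem_L_iff {a : ℤ} : a ∈ L ↔ ∃ j ∈ tailSet n k, u j = a := by
  have : a ∈ L ↔ a ∈ (↑L : Multiset ℤ) := Iff.rfl
  rw [this, hL]
  have : a ∈ ((tailSet n k).image u).val ↔ a ∈ (tailSet n k).image u := Iff.rfl
  rw [this, Finset.mem_image]

lemma glue_tail_mem {i : Fin n} (hi : k ≤ (i : ℕ)) : glue k u L i ∈ L := by
  have hlen := glue_len hu hL
  have hidx : (i : ℕ) - k < L.length := by have := i.isLt; omega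
  rw [glue, if_neg (by omega), List.getD_eq_get _ 0 ⟨_, hidx⟩]
  exact List.get_mem _ _

lemma glue_inj : Function.Injective (glue k u L) := by
  have hlen := glue_len hu hL
  have hnodup : L.Nodup := by
    have h : (↑L : Multiset ℤ).Nodup := by rw [hL]; exact ((tailSet n k).image u).nodup
    exact h
  have key : ∀ a b : Fin n, (a : ℕ) < k → ¬ (b : ℕ) < k →
      glue k u L a = glue k u L b → False := by
    intro a b ha hb hab
    rw [glue, glue, if_pos ha, if_neg hb] at hab
    have hmem : u a ∈ L := by
      have h := glue_tail_mem hu hL (show k ≤ (b : ℕ) by omega)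
      rw [glue, if_neg hb] at h
      rw [hab]; exact h
    obtain ⟨c, hc, hca⟩ := (mem_L_iff hu hL).1 hmem
    have hc2 : c = a := hu hca
    simp only [tailSet, Finset.mem_filter] at hc
    rw [hc2] at hc
    exact absurd hc.2 (by omega)
  intro a b hab
  by_cases ha : (a : ℕ) < k <;> by_cases hb : (b : ℕ) < k
  · exact hu (by rwa [glue, glue, if_pos ha, if_pos hb] at hab)
  · exact absurd hab (fun h => key a b ha hb h)
  · exact absurd hab.symm (fun h => key b a hb ha h)
  · rw [glue, glue, if_neg ha, if_neg hb] at hab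
    have hia : (a : ℕ) - k < L.length := by have := a.isLt; omega
    have hib : (b : ℕ) - k < L.length := by have := b.isLt; omega
    rw [List.getD_eq_get _ 0 ⟨_, hia⟩, List.getD_eq_get _ 0 ⟨_, hib⟩] at hab
    have := (hnodup.get_inj_iff).1 hab
    have hval : (a : ℕ) - k = (b : ℕ) - k := congrArg Fin.val this
    apply Fin.ext; omega

lemma glue_tval : tval k (glue k u L) = tval k u := by
  have hlen := glue_len hu hL
  have hnd : ((tailSet n k).val).Nodup := (tailSet n k).nodup
  have h1 : (tval k (glue k u L)).Nodup := hnd.map (glue_inj hu hL)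
  have h2 : (tval k u).Nodup := hnd.map hu
  rw [Multiset.Nodup.ext h1 h2]
  intro a
  simp only [tval, Multiset.mem_map]
  constructor
  · rintro ⟨j, hj, rfl⟩
    have hjt : j ∈ tailSet n k := hj
    simp only [tailSet, Finset.mem_filter] at hjt
    have hmem : glue k u L j ∈ L := glue_tail_mem hu hL hjt.2
    obtain ⟨c, hc, hca⟩ := (mem_L_iff hu hL).1 hmem
    exact ⟨c, hc, hca⟩
  · rintro ⟨c, hc, rfl⟩
    have hcF : c ∈ tailSet n k := hc
    have hmem : u c ∈ L := (mem_L_iff hu hL).2 ⟨c, hcF, rfl⟩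
    obtain ⟨⟨t, ht⟩, hget⟩ := List.mem_iff_get.1 hmem
    simp only [tailSet, Finset.mem_filter] at hcF
    have hkn : k + t < n := by have := c.isLt; omega
    refine ⟨⟨k + t, hkn⟩, ?_, ?_⟩
    · simp [tailSet]
    · show glue k u L _ = _
      rw [glue, if_neg (by simp)]
      simp only [Nat.add_sub_cancel_left]
      rw [List.getD_eq_get _ 0 ⟨t, (show t < L.length from ht)⟩]
      exact hget

lemma glue_mem_range (i : Fin n) : ∃ j : Fin n, glue k u L i = u j := by
  by_cases hi : (i : ℕ) < k
  · exact ⟨i, by rw [glue, if_pos hi]⟩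
  · have hmem : glue k u L i ∈ L := glue_tail_mem hu hL (by omega)
    obtain ⟨c, _, hca⟩ := (mem_L_iff hu hL).1 hmem
    exact ⟨c, hca.symm⟩

lemma glue_signed (hs : IsSignedPerm u) : IsSignedPerm (glue k u L) := by
  constructor
  · intro i
    obtain ⟨j, hj⟩ := glue_mem_range hu hL i
    rw [hj]
    exact hs.1 j
  · intro a b hab
    simp only at hab
    obtain ⟨ja, hja⟩ := glue_mem_range hu hL a
    obtain ⟨jb, hjb⟩ := glue_mem_range hu hL b
    rw [hja, hjb] at hab
    have : ja = jb := hs.2 hab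
    apply glue_inj hu hL
    rw [hja, hjb, this]

end Glue

lemma signed_inj {n : ℕ} {u : Fin n → ℤ} (hs : IsSignedPerm u) : Function.Injective u := by
  intro a b h
  apply hs.2
  simp only
  rw [h]

lemma codeS_tail_zero {n k : ℕ} {v : Fin n → ℤ}
    (htail : ∀ i j : Fin n, i < j → k ≤ (i : ℕ) → v i < v j)
    {i : Fin n} (hi : k ≤ (i : ℕ)) : codeS v i = 0 := by
  rw [codeS, Finset.card_eq_zero, Finset.filter_eq_empty_iff]
  rintro j _ ⟨hij, hvj⟩
  exact absurd hvj (not_lt.2 (le_of_lt (htail i j hij hi)))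

lemma image_tail_eq {n k : ℕ} {w v : Fin n → ℤ}
    (h : (tailSet n k).val.map w = (tailSet n k).val.map v) :
    (tailSet n k).image w = (tailSet n k).image v :=
  Finset.val_inj.1 (by rw [Finset.image_val, Finset.image_val, h])

lemma ge_image_decomp {n k : ℕ} {u : Fin n → ℤ} (hu : Function.Injective u)
    {i : Fin n} (hi : k ≤ (i : ℕ)) :
    (Finset.univ.filter fun j : Fin n => (i : ℕ) ≤ (j : ℕ)).image u
      = (tailSet n k).image u
        \ ((Finset.univ.filter fun j : Fin n => k ≤ (j : ℕ) ∧ (j : ℕ) < (i : ℕ)).image u) := by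
  have hsplit : tailSet n k
      = (Finset.univ.filter fun j : Fin n => k ≤ (j : ℕ) ∧ (j : ℕ) < (i : ℕ))
        ∪ (Finset.univ.filter fun j : Fin n => (i : ℕ) ≤ (j : ℕ)) := by
    ext j
    simp only [tailSet, Finset.mem_union, Finset.mem_filter, Finset.mem_univ, true_and]
    omega
  have hdisj : Disjoint
      ((Finset.univ.filter fun j : Fin n => k ≤ (j : ℕ) ∧ (j : ℕ) < (i : ℕ)).image u)
      ((Finset.univ.filter fun j : Fin n => (i : ℕ) ≤ (j : ℕ)).image u) := by
    rw [Finset.disjoint_left]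
    rintro a ha hb
    simp only [Finset.mem_image, Finset.mem_filter, Finset.mem_univ, true_and] at ha hb
    obtain ⟨c, hc, rfl⟩ := ha
    obtain ⟨d, hd, hdc⟩ := hb
    have hh : d = c := hu hdc
    omega
  rw [hsplit, Finset.image_union, Finset.union_sdiff_cancel_left hdisj]

lemma rank_code {n : ℕ} {u : Fin n → ℤ} (hu : Function.Injective u) (i : Fin n) :
    (((Finset.univ.filter fun j : Fin n => (i : ℕ) ≤ (j : ℕ)).image u).filter
        fun z => z < u i).card = codeS u i := by
  have hins : (Finset.univ.filter fun j : Fin n => (i : ℕ) ≤ (j : ℕ))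
      = insert i (Finset.univ.filter fun j : Fin n => (i : ℕ) < (j : ℕ)) := by
    ext j
    simp only [Finset.mem_insert, Finset.mem_filter, Finset.mem_univ, true_and]
    constructor
    · intro h
      rcases Nat.eq_or_lt_of_le h with h1 | h1
      · exact Or.inl (Fin.ext h1.symm)
      · exact Or.inr h1
    · rintro (rfl | h)
      · exact le_refl _
      · exact le_of_lt h
  rw [hins, Finset.image_insert, Finset.filter_insert, if_neg (lt_irrefl (u i))]
  have hcomm : ((Finset.univ.filter fun j : Fin n => (i : ℕ) < (j : ℕ)).image u).filter
        (fun z => z < u i)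
      = ((Finset.univ.filter fun j : Fin n => (i : ℕ) < (j : ℕ)).filter
          fun j => u j < u i).image u := by
    ext z
    simp only [Finset.mem_filter, Finset.mem_image, Finset.mem_univ, true_and]
    constructor
    · rintro ⟨⟨j, hj, rfl⟩, hz⟩
      exact ⟨j, ⟨hj, hz⟩, rfl⟩
    · rintro ⟨j, ⟨hj, hz⟩, rfl⟩
      exact ⟨⟨j, hj, rfl⟩, hz⟩
  rw [hcomm, Finset.card_image_of_injective _ hu, Finset.filter_filter, codeS]
  have hfc : (Finset.univ.filter fun j : Fin n => (i : ℕ) < (j : ℕ) ∧ u j < u i)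
      = Finset.univ.filter fun j : Fin n => i < j ∧ u j < u i := by
    apply Finset.filter_congr
    intro j _
    simp only [Fin.lt_def]
  rw [hfc]


lemma tInv_zero {n k : ℕ} {v : Fin n → ℤ}
    (htail : ∀ i j : Fin n, i < j → k ≤ (i : ℕ) → v i < v j) : tInv k v = 0 := by
  rw [tInv_eq_sum]
  apply Finset.sum_eq_zero
  intro i hi
  simp only [tailSet, Finset.mem_filter] at hi
  exact codeS_tail_zero htail hi.2

lemma tInv_C {n k : ℕ} {C : ℕ → ℕ} {w : Fin n → ℤ} (hcode : TruncCodeEq k w C) :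
    tInv k w = ∑ i ∈ Finset.range (n - k), C i := by
  rw [tInv_eq_sum, ← sum_tail_C C]
  apply Finset.sum_congr rfl
  intro i hi
  simp only [tailSet, Finset.mem_filter] at hi
  exact hcode i hi.2

lemma part1 {n k : ℕ} (C : ℕ → ℕ) (w : Fin n → ℤ) (hw : IsSignedPerm w)
    (hinc : IncUpTo k w) (hcode : TruncCodeEq k w C) :
    ∃ v : Fin n → ℤ, SortsTail k w v ∧ IsGrass k v ∧
      lenS v + ∑ i ∈ Finset.range (n - k), C i = lenS w := by
  have hu : Function.Injective w := signed_inj hw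
  set L : List ℤ := ((tailSet n k).image w).sort (· ≤ ·) with hLdef
  have hL : (↑L : Multiset ℤ) = ((tailSet n k).image w).val := Finset.sort_eq _ _
  set v := glue k w L with hvdef
  have hlen : L.length = n - k := glue_len hu hL
  have hsorted : L.SortedLT := Finset.sortedLT_sort _
  have htail_inc : ∀ i j : Fin n, i < j → k ≤ (i : ℕ) → v i < v j := by
    intro i j hij hk
    have hij' : (i : ℕ) < (j : ℕ) := Fin.lt_def.1 hij
    have hia : (i : ℕ) - k < L.length := by have := i.isLt; omega
    have hib : (j : ℕ) - k < L.length := by have := j.isLt; omega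
    show glue k w L i < glue k w L j
    rw [glue, glue, if_neg (by omega), if_neg (by omega),
      List.getD_eq_get _ 0 ⟨_, hia⟩, List.getD_eq_get _ 0 ⟨_, hib⟩]
    exact hsorted.strictMono_get (show (⟨(i : ℕ) - k, hia⟩ : Fin L.length) < ⟨(j : ℕ) - k, hib⟩
      from by simp only [Fin.mk_lt_mk]; omega)
  have hhead : ∀ i : Fin n, (i : ℕ) < k → v i = w i := fun i hi => by
    rw [hvdef, glue, if_pos hi]
  have htv : tval k v = tval k w := glue_tval hu hL
  have hst : SortsTail k w v := ⟨hhead, htail_inc, htv⟩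
  have hinc' : IncUpTo k v := by
    constructor
    · intro i hi; rw [hhead i hi]; exact hinc.1 i hi
    · intro i j hij hj
      have hi : (i : ℕ) < k := lt_trans (Fin.lt_def.1 hij) hj
      rw [hhead i hi, hhead j hj]
      exact hinc.2 i j hij hj
  have hgrass : IsGrass k v := ⟨glue_signed hu hL hw, hinc', htail_inc⟩
  have hrel := len_rel (k := k) hhead htv
  have h0 : tInv k v = 0 := tInv_zero htail_inc
  have hC : tInv k w = ∑ i ∈ Finset.range (n - k), C i := tInv_C hcode
  exact ⟨v, hst, hgrass, by omega⟩

lemma part3 {n k : ℕ} (C : ℕ → ℕ) (hCbd : ∀ i : ℕ, i < n - k → C i + i + 1 ≤ n - k)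
    (v : Fin n → ℤ) (hgr : IsGrass k v) :
    ∃ w : Fin n → ℤ, IsSignedPerm w ∧ IncUpTo k w ∧ TruncCodeEq k w C ∧ SortsTail k w v := by
  obtain ⟨hsp, hinc, htl⟩ := hgr
  have hv : Function.Injective v := signed_inj hsp
  have hScard : ((tailSet n k).image v).card = n - k := by
    rw [Finset.card_image_of_injective _ hv, card_tailSet]
  have hbd' : ∀ t, t < n - k → C (0 + t) + t + 1 ≤ n - k := by
    intro t ht
    have := hCbd t ht
    simpa using this
  obtain ⟨hmul, hcodeL⟩ := buildL_spec C (n - k) 0 ((tailSet n k).image v) hScard hbd'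
  set L : List ℤ := buildL C (n - k) 0 ((tailSet n k).image v) with hLdef
  have hL : (↑L : Multiset ℤ) = ((tailSet n k).image v).val := hmul
  set w := glue k v L with hwdef
  have hlenL : L.length = n - k := buildL_length C (n - k) 0 _
  have hhead : ∀ i : Fin n, (i : ℕ) < k → w i = v i := fun i hi => by
    rw [hwdef, glue, if_pos hi]
  have htv : tval k w = tval k v := glue_tval hv hL
  refine ⟨w, glue_signed hv hL hsp, ?_, ?_, ?_⟩
  · constructor
    · intro i hi; rw [hhead i hi]; exact hinc.1 i hi
    · intro i j hij hj
      have hi : (i : ℕ) < k := lt_trans (Fin.lt_def.1 hij) hj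
      rw [hhead i hi, hhead j hj]
      exact hinc.2 i j hij hj
  · intro i hik
    have hikn : (i : ℕ) - k < n - k := by have := i.isLt; omega
    have hm := hcodeL ((i : ℕ) - k) hikn
    simp only [Nat.zero_add] at hm
    rw [codeS, ← hm]
    have hkn : k < n := by have := i.isLt; omega
    refine Finset.card_bij' (i := fun (j : Fin n) (_ : j ∈ Finset.univ.filter
        fun j : Fin n => i < j ∧ w j < w i) => (j : ℕ) - k)
      (j := fun (t' : ℕ) (ht' : t' ∈ (Finset.range (n - k)).filter
        fun t' => (i : ℕ) - k < t' ∧ L.getD t' 0 < L.getD ((i : ℕ) - k) 0) =>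
        (⟨k + t', by simp only [Finset.mem_filter, Finset.mem_range] at ht'; omega⟩ : Fin n))
      ?_ ?_ ?_ ?_
    · intro j hj
      simp only [Finset.mem_filter, Finset.mem_univ, true_and] at hj
      obtain ⟨hij, hwj⟩ := hj
      have hij' : (i : ℕ) < (j : ℕ) := hij
      have hkj : k ≤ (j : ℕ) := by omega
      rw [hwdef, glue, glue, if_neg (by omega), if_neg (by omega)] at hwj
      simp only [Finset.mem_filter, Finset.mem_range]
      refine ⟨by have := j.isLt; omega, by omega, hwj⟩
    · intro t' ht'
      simp only [Finset.mem_filter, Finset.mem_range] at ht'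
      obtain ⟨ht1, ht2, ht3⟩ := ht'
      simp only [Finset.mem_filter, Finset.mem_univ, true_and]
      constructor
      · show (i : ℕ) < k + t'
        omega
      · rw [hwdef, glue, glue, if_neg (show ¬ k + t' < k by omega), if_neg (by omega)]
        show L.getD (k + t' - k) 0 < L.getD ((i : ℕ) - k) 0
        rw [show k + t' - k = t' from by omega]
        exact ht3
    · intro j hj
      simp only [Finset.mem_filter, Finset.mem_univ, true_and] at hj
      have hij' : (i : ℕ) < (j : ℕ) := hj.1
      apply Fin.ext
      show k + ((j : ℕ) - k) = (j : ℕ)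
      omega
    · intro t' ht'
      simp only [Finset.mem_filter, Finset.mem_range] at ht'
      show k + t' - k = t'
      omega
  · exact ⟨fun i hi => (hhead i hi).symm, htl, htv.symm⟩

lemma part2 {n k : ℕ} (C : ℕ → ℕ) (w w' v : Fin n → ℤ)
    (hw : IsSignedPerm w) (hcw : TruncCodeEq k w C)
    (hw' : IsSignedPerm w') (hcw' : TruncCodeEq k w' C)
    (hst : SortsTail k w v) (hst' : SortsTail k w' v) : w = w' := by
  have hwi : Function.Injective w := signed_inj hw
  have hw'i : Function.Injective w' := signed_inj hw'
  have htlw : (tailSet n k).image w = (tailSet n k).image w' := by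
    have h1 : (tailSet n k).val.map v = (tailSet n k).val.map w := hst.2.2
    have h2 : (tailSet n k).val.map v = (tailSet n k).val.map w' := hst'.2.2
    exact image_tail_eq (h1.symm.trans h2)
  have H : ∀ N : ℕ, ∀ i : Fin n, (i : ℕ) = N → w i = w' i := by
    intro N
    induction N using Nat.strong_induction_on with
    | _ N IH =>
      intro i hiN
      by_cases hik : (i : ℕ) < k
      · rw [← hst.1 i hik]
        exact hst'.1 i hik
      · push_neg at hik
        have hmid : (Finset.univ.filter fun j : Fin n => k ≤ (j : ℕ) ∧ (j : ℕ) < (i : ℕ)).image w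
            = (Finset.univ.filter fun j : Fin n => k ≤ (j : ℕ) ∧ (j : ℕ) < (i : ℕ)).image w' := by
          apply Finset.image_congr
          intro j hj
          simp only [Finset.coe_filter, Set.mem_setOf_eq] at hj
          exact IH (j : ℕ) (by omega) j rfl
        have hA : (Finset.univ.filter fun j : Fin n => (i : ℕ) ≤ (j : ℕ)).image w
            = (Finset.univ.filter fun j : Fin n => (i : ℕ) ≤ (j : ℕ)).image w' := by
          rw [ge_image_decomp hwi hik, ge_image_decomp hw'i hik, htlw, hmid]
        have hwmem : w i ∈ (Finset.univ.filter fun j : Fin n => (i : ℕ) ≤ (j : ℕ)).image w :=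
          Finset.mem_image_of_mem w (by simp)
        have hw'mem : w' i ∈ (Finset.univ.filter fun j : Fin n => (i : ℕ) ≤ (j : ℕ)).image w := by
          rw [hA]
          exact Finset.mem_image_of_mem w' (by simp)
        apply rank_inj hwmem hw'mem
        rw [rank_code hwi i]
        have h2 : ((((Finset.univ.filter fun j : Fin n => (i : ℕ) ≤ (j : ℕ)).image w).filter
            fun z => z < w' i)).card = codeS w' i := by
          rw [hA]
          exact rank_code hw'i i
        rw [h2, hcw i hik, hcw' i hik]
  funext i
  exact H (i : ℕ) i rfl

end S13

/-- The map w ↦ v(w) is a bijection from the signed permutations increasing up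
to k with k-truncated A-code C onto the k-Grassmannian elements of W_n, and
ℓ(v(w)) = ℓ(w) − Σ C_i. -/
theorem stmt13 (n k : ℕ) (C : ℕ → ℕ)
    (hC : ∀ a b : ℕ, a ≤ b → C b ≤ C a)
    (hCbd : ∀ i : ℕ, i < n - k → C i + i + 1 ≤ n - k) :
    (∀ w : Fin n → ℤ, IsSignedPerm w → IncUpTo k w → TruncCodeEq k w C →
      ∃ v : Fin n → ℤ, SortsTail k w v ∧ IsGrass k v ∧
        lenS v + ∑ i ∈ Finset.range (n - k), C i = lenS w) ∧
    (∀ w w' v : Fin n → ℤ,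
      IsSignedPerm w → IncUpTo k w → TruncCodeEq k w C →
      IsSignedPerm w' → IncUpTo k w' → TruncCodeEq k w' C →
      SortsTail k w v → SortsTail k w' v → w = w') ∧
    (∀ v : Fin n → ℤ, IsGrass k v →
      ∃ w : Fin n → ℤ, IsSignedPerm w ∧ IncUpTo k w ∧ TruncCodeEq k w C ∧
        SortsTail k w v) :=
  ⟨fun w hw hinc hcode => S13.part1 C w hw hinc hcode,
   fun w w' v hw _ hcw hw' _ hcw' hst hst' => S13.part2 C w w' v hw hcw hw' hcw' hst hst',
   fun v hgr => S13.part3 C hCbd v hgr⟩
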